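/- With E(t) the solution of B_t(E(t)) = 0, define F_0(t) = Σ_{n≥3} (1/n!) Σ_{i_1+...+i_n = n−3} (n−3)!/(i_1!···i_n!) · t_{i_1}···t_{i_n}. Then ∂²F_0 / ∂t_i ∂t_ℓ = E(t)^{i+ℓ+1} / (i! ℓ! (i+ℓ+1)) for all i, ℓ ≥ 0. In particular ∂²F_0/∂t_0² = E(t). -/

import Mathlib

open MvPowerSeries

/-- Formal partial derivative `∂/∂tⱼ` on `ℚ[[t₀, t₁, …]]`. -/
noncomputable def pd (j : ℕ) (F : MvPowerSeries ℕ ℚ) : MvPowerSeries ℕ ℚ :=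
  fun d => (d j + 1 : ℕ) • MvPowerSeries.coeff (R := ℚ) (d + Finsupp.single j 1) F

noncomputable def deg (d : ℕ →₀ ℕ) : ℕ := d.sum fun _ m => m
noncomputable def wt (d : ℕ →₀ ℕ) : ℕ := d.sum fun j m => j * m
noncomputable def W (d : ℕ →₀ ℕ) : ℕ := d.prod fun j m => m.factorial * j.factorial ^ m

lemma deg_add (a b : ℕ →₀ ℕ) : deg (a + b) = deg a + deg b := by
  simp [deg, Finsupp.sum_add_index']

lemma wt_add (a b : ℕ →₀ ℕ) : wt (a + b) = wt a + wt b := by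
  simp [wt, Finsupp.sum_add_index', Nat.mul_add]

lemma deg_single (j : ℕ) : deg (Finsupp.single j 1) = 1 := by
  simp [deg, Finsupp.sum_single_index]

lemma wt_single (j : ℕ) : wt (Finsupp.single j 1) = j := by
  simp [wt, Finsupp.sum_single_index]

lemma deg_eq_zero (d : ℕ →₀ ℕ) : deg d = 0 ↔ d = 0 := by
  constructor
  · intro h
    ext j
    simp only [Finsupp.coe_zero, Pi.zero_apply]
    by_contra hj
    have hjs : j ∈ d.support := Finsupp.mem_support_iff.2 (by simpa using hj)
    have : d j ≤ deg d := Finset.single_le_sum (f := fun j => d j) (fun _ _ => Nat.zero_le _) hjs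
    omega
  · rintro rfl; simp [deg]

lemma W_pos (d : ℕ →₀ ℕ) : 0 < W d := by
  apply Finset.prod_pos
  intro j hj
  positivity

lemma W_add_single (e : ℕ →₀ ℕ) (j : ℕ) :
    W (e + Finsupp.single j 1) = (e j + 1) * j.factorial * W e := by
  classical
  set d' : ℕ →₀ ℕ := e + Finsupp.single j 1 with hd'
  set f : ℕ → ℕ → ℕ := fun i m => m.factorial * i.factorial ^ m with hf
  have hf1 : ∀ i, f i 0 = 1 := by simp [hf]
  set s : Finset ℕ := insert j e.support with hs
  have hsub1 : d'.support ⊆ s := by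
    refine Finsupp.support_add.trans ?_
    intro x hx
    rcases Finset.mem_union.1 hx with h | h
    · exact Finset.mem_insert_of_mem h
    · have hx2 := Finsupp.support_single_subset h
      simp only [Finset.mem_singleton] at hx2
      subst hx2
      exact Finset.mem_insert_self _ _
  have hsub2 : e.support ⊆ s := Finset.subset_insert _ _
  have h1 : W d' = ∏ i ∈ s, f i (d' i) :=
    Finsupp.prod_of_support_subset _ hsub1 f (fun i _ => hf1 i)
  have h2 : W e = ∏ i ∈ s, f i (e i) :=
    Finsupp.prod_of_support_subset _ hsub2 f (fun i _ => hf1 i)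
  have hjs : j ∈ s := Finset.mem_insert_self _ _
  rw [h1, h2, ← Finset.mul_prod_erase s _ hjs, ← Finset.mul_prod_erase s (fun i => f i (e i)) hjs]
  have hterm : ∀ i ∈ s.erase j, f i (d' i) = f i (e i) := by
    intro i hi
    have hij : i ≠ j := (Finset.mem_erase.1 hi).1
    have : d' i = e i := by
      rw [hd']
      simp [Finsupp.single_apply, hij.symm]
    rw [this]
  rw [Finset.prod_congr rfl hterm]
  have hjval : d' j = e j + 1 := by simp [hd']
  rw [hjval]
  have hstep : f j (e j + 1) = (e j + 1) * j.factorial * f j (e j) := by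
    simp only [hf, Nat.factorial_succ, pow_succ]
    ring
  rw [hstep]
  ring

lemma deg_sub_single (d : ℕ →₀ ℕ) (i : ℕ) (h : Finsupp.single i 1 ≤ d) :
    deg d = deg (d - Finsupp.single i 1) + 1 := by
  conv_lhs => rw [← tsub_add_cancel_of_le h]
  rw [deg_add, deg_single]

noncomputable def c (m : ℕ) (d : ℕ →₀ ℕ) : ℚ :=
  if m = 0 then (if d = 0 then 1 else 0)
  else if wt d + m = deg d then ((m * (deg d - 1).factorial : ℕ) : ℚ) / ((W d : ℕ) : ℚ) else 0

lemma deg_single' (j k : ℕ) : deg (Finsupp.single j k) = k := by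
  simp [deg]

lemma sub_single_facts (d e : ℕ →₀ ℕ) (i : ℕ) (hde : e + Finsupp.single i 1 = d) :
    deg d = deg e + 1 ∧ wt d = wt e + i ∧
    W d = d i * i.factorial * W e ∧ d i = e i + 1 := by
  have hdi : d i = e i + 1 := by rw [← hde]; simp
  refine ⟨?_, ?_, ?_, hdi⟩
  · rw [← hde, deg_add, deg_single]
  · rw [← hde, wt_add, wt_single]
  · rw [← hde, W_add_single]; simp

lemma eq_single_of_deg_one_wt_zero (d : ℕ →₀ ℕ) (h1 : deg d = 1) (h0 : wt d = 0) :
    d = Finsupp.single 0 1 := by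
  have hz : ∀ j, j ≠ 0 → d j = 0 := by
    intro j hj
    by_contra hdj
    have hjs : j ∈ d.support := Finsupp.mem_support_iff.2 hdj
    have hle : j * d j ≤ wt d :=
      Finset.single_le_sum (f := fun j => j * d j) (fun _ _ => Nat.zero_le _) hjs
    have hdj1 : 1 ≤ d j := Nat.one_le_iff_ne_zero.2 hdj
    rw [h0] at hle
    rcases Nat.mul_eq_zero.1 (Nat.eq_zero_of_le_zero hle) with h' | h' <;> omega
  have hds : d = Finsupp.single 0 (d 0) := by
    ext j
    rcases eq_or_ne j 0 with rfl | hj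
    · simp
    · rw [hz j hj, Finsupp.single_apply, if_neg (fun h => hj h.symm)]
  rw [hds] at h1
  rw [deg_single'] at h1
  rw [hds, h1]

lemma c_identity (d : ℕ →₀ ℕ) (hd : d ≠ 0) (m : ℕ) :
    c (m + 1) d = ∑ i ∈ Finset.range (deg d + 1),
      (i.factorial : ℚ)⁻¹ *
        (if Finsupp.single i 1 ≤ d then c (i + m) (d - Finsupp.single i 1) else 0) := by
  classical
  set n := deg d with hn
  set w := wt d with hw
  by_cases hcond : w + (m + 1) = n
  · -- main case
    by_cases hn1 : n = 1
    · -- then w = 0, m = 0, d = single 0 1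
      have hm0 : m = 0 := by omega
      have hd01 : d = Finsupp.single 0 1 :=
        eq_single_of_deg_one_wt_zero d (by rw [← hn]; omega) (by rw [← hw]; omega)
      subst hm0
      rw [hn1]
      rw [Finset.sum_range_succ, Finset.sum_range_one]
      have hW : W d = 1 := by
        rw [hd01, W]
        rw [Finsupp.prod_single_index] <;> simp
      have hle0 : Finsupp.single 0 1 ≤ d := by rw [hd01]
      have hle1 : ¬ Finsupp.single 1 1 ≤ d := by
        rw [hd01, Finsupp.single_le_iff]
        simp [Finsupp.single_apply]
      rw [if_pos hle0, if_neg hle1]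
      have hsub : d - Finsupp.single 0 1 = 0 := by rw [hd01]; simp
      rw [hsub]
      have hc0 : c 0 0 = 1 := by simp [c]
      have hc1 : c (0 + 1) d = 1 := by
        rw [c]
        rw [if_neg (by omega), if_pos (by rw [← hw, ← hn]; omega), hW, ← hn, hn1]
        norm_num
      rw [hc0, hc1]
      norm_num
    · -- n ≥ 2
      have hn2 : 2 ≤ n := by
        rcases Nat.eq_zero_or_pos n with h | h
        · rw [hn, deg_eq_zero] at h; exact absurd h hd
        · omega
      have hsupp : d.support ⊆ Finset.range (n + 1) := by
        intro j hj
        have hdj : 1 ≤ d j := Nat.one_le_iff_ne_zero.2 (Finsupp.mem_support_iff.1 hj)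
        have h2 : j * d j ≤ w :=
          Finset.single_le_sum (f := fun j => j * d j) (fun _ _ => Nat.zero_le _) hj
        have h3 : j ≤ w := le_trans (Nat.le_mul_of_pos_right j hdj) h2
        rw [Finset.mem_range]; omega
      have hterm : ∀ i ∈ Finset.range (n + 1),
          (i.factorial : ℚ)⁻¹ *
            (if Finsupp.single i 1 ≤ d then c (i + m) (d - Finsupp.single i 1) else 0) =
          (((i + m) * d i * (n - 2).factorial : ℕ) : ℚ) / ((W d : ℕ) : ℚ) := by
        intro i _
        by_cases hle : Finsupp.single i 1 ≤ d
        · obtain ⟨hdeg, hwt, hWd, hdi⟩ :=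
            sub_single_facts d (d - Finsupp.single i 1) i (tsub_add_cancel_of_le hle)
          set e := d - Finsupp.single i 1 with hedef
          rw [if_pos hle]
          rcases Nat.eq_zero_or_pos (i + m) with him | him
          · have hene : e ≠ 0 := by
              intro h0
              have h1 : deg e = 0 := by rw [h0]; exact (deg_eq_zero 0).2 rfl
              omega
            rw [him, c, if_pos rfl, if_neg hene, mul_zero]
            simp
          · have hcnd : wt e + (i + m) = deg e := by omega
            rw [c, if_neg (by omega), if_pos hcnd]
            have hdeg2 : deg e - 1 = n - 2 := by omega
            rw [hdeg2]
            have hWe : ((W e : ℕ) : ℚ) ≠ 0 := (Nat.cast_pos.2 (W_pos e)).ne'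
            have hWdne : ((W d : ℕ) : ℚ) ≠ 0 := (Nat.cast_pos.2 (W_pos d)).ne'
            have hfac : (i.factorial : ℚ) ≠ 0 := Nat.cast_ne_zero.2 i.factorial_ne_zero
            have hWdQ : ((W d : ℕ) : ℚ) = (d i : ℚ) * (i.factorial : ℚ) * ((W e : ℕ) : ℚ) := by
              exact_mod_cast congrArg (Nat.cast : ℕ → ℚ) hWd
            have hdine : ((d i : ℕ) : ℚ) ≠ 0 := Nat.cast_ne_zero.2 (by omega)
            rw [hWdQ]
            field_simp
            push_cast
            ring
        · rw [if_neg hle, mul_zero]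
          have hdi : d i = 0 := by
            by_contra h
            exact hle (Finsupp.single_le_iff.2 (Nat.one_le_iff_ne_zero.2 h))
          rw [hdi]
          simp
      rw [Finset.sum_congr rfl hterm]
      -- sum computation
      have hs1 : (∑ i ∈ Finset.range (n + 1), i * d i) = w := by
        rw [hw, wt]
        exact (Finsupp.sum_of_support_subset d hsupp (fun j m => j * m) (by simp)).symm
      have hs2 : (∑ i ∈ Finset.range (n + 1), d i) = n := by
        rw [hn, deg]
        exact (Finsupp.sum_of_support_subset d hsupp (fun _ m => m) (by simp)).symm
      have hNat : (∑ i ∈ Finset.range (n + 1), (i + m) * d i * (n - 2).factorial)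
          = (m + 1) * (n - 1).factorial := by
        obtain ⟨k, hk⟩ : ∃ k, n = k + 2 := ⟨n - 2, by omega⟩
        have hsum : (∑ i ∈ Finset.range (n + 1), (i + m) * d i)
            = w + m * n := by
          calc (∑ i ∈ Finset.range (n + 1), (i + m) * d i)
              = ∑ i ∈ Finset.range (n + 1), (i * d i + m * d i) := by
                refine Finset.sum_congr rfl fun i _ => by ring
            _ = (∑ i ∈ Finset.range (n + 1), i * d i)
                + ∑ i ∈ Finset.range (n + 1), m * d i := Finset.sum_add_distrib
            _ = w + m * n := by rw [hs1, ← Finset.mul_sum, hs2]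
        rw [← Finset.sum_mul, hsum]
        have h2 : w + m = k + 1 := by omega
        have h3 : w + m * n = (m + 1) * (k + 1) := by
          calc w + m * n = (w + m) + m * (k + 1) := by rw [hk]; ring
            _ = (k + 1) + m * (k + 1) := by rw [h2]
            _ = (m + 1) * (k + 1) := by ring
        rw [h3, hk]
        have h4 : k + 2 - 1 = k + 1 := by omega
        have h5 : k + 2 - 2 = k := by omega
        rw [h4, h5, Nat.factorial_succ]
        ring
      rw [← Finset.sum_div, ← Nat.cast_sum, hNat]
      rw [c, if_neg (by omega), if_pos (by rw [← hw, ← hn]; omega), ← hn]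
  · -- condition fails: both sides zero
    have hLHS : c (m + 1) d = 0 := by
      rw [c, if_neg (by omega), if_neg (by rw [← hw, ← hn]; omega)]
    rw [hLHS]
    symm
    apply Finset.sum_eq_zero
    intro i _
    by_cases hle : Finsupp.single i 1 ≤ d
    · obtain ⟨hdeg, hwt, hWd, hdi⟩ :=
        sub_single_facts d (d - Finsupp.single i 1) i (tsub_add_cancel_of_le hle)
      set e := d - Finsupp.single i 1 with hedef
      rw [if_pos hle]
      rcases Nat.eq_zero_or_pos (i + m) with him | him
      · have hi0 : i = 0 := by omega
        have hene : e ≠ 0 := by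
          intro h0
          have hdeq : d = Finsupp.single 0 1 := by
            have h1 := tsub_add_cancel_of_le hle
            rw [← hedef] at h1
            rw [h0, zero_add] at h1
            rw [← h1, hi0]
          apply hcond
          rw [hw, hn, hdeq, wt_single, deg_single]
          omega
        rw [him, c, if_pos rfl, if_neg hene, mul_zero]
      · have hcnd : ¬ (wt e + (i + m) = deg e) := by omega
        rw [c, if_neg (by omega), if_neg hcnd, mul_zero]
    · rw [if_neg hle, mul_zero]

lemma coeff_X_mul' (i : ℕ) (φ : MvPowerSeries ℕ ℚ) (d : ℕ →₀ ℕ) :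
    MvPowerSeries.coeff (R := ℚ) d (MvPowerSeries.X i * φ) =
      if Finsupp.single i 1 ≤ d then MvPowerSeries.coeff (R := ℚ) (d - Finsupp.single i 1) φ else 0 := by
  rw [X_def, coeff_monomial_mul]
  simp

lemma coeff_pow_zero_of_deg_lt (E : MvPowerSeries ℕ ℚ)
    (hE0 : MvPowerSeries.constantCoeff (σ := ℕ) (R := ℚ) E = 0) :
    ∀ k d, deg d < k → MvPowerSeries.coeff (R := ℚ) d (E ^ k) = 0 := by
  intro k
  induction k with
  | zero => intro d h; omega
  | succ k ih =>
    intro d h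
    rw [pow_succ, mul_comm, MvPowerSeries.coeff_mul]
    apply Finset.sum_eq_zero
    rintro ⟨a, b⟩ hab
    rw [Finset.HasAntidiagonal.mem_antidiagonal] at hab
    by_cases ha : a = 0
    · subst ha
      have : MvPowerSeries.coeff (R := ℚ) (0 : ℕ →₀ ℕ) E = 0 := hE0
      rw [this, zero_mul]
    · have hdega : 1 ≤ deg a := by
        rcases Nat.eq_zero_or_pos (deg a) with h0 | h0
        · exact absurd ((deg_eq_zero a).1 h0) ha
        · exact h0
      have : deg b < k := by
        have := deg_add a b
        rw [hab] at this
        omega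
      rw [ih b this, mul_zero]

lemma coeff_pow_succ (E : MvPowerSeries ℕ ℚ)
    (hE0 : MvPowerSeries.constantCoeff (σ := ℕ) (R := ℚ) E = 0)
    (hEeq : ∀ d : ℕ →₀ ℕ,
      MvPowerSeries.coeff (R := ℚ) d E =
        ∑ i ∈ Finset.range ((d.sum fun _ m => m) + 1),
          (i.factorial : ℚ)⁻¹ * MvPowerSeries.coeff (R := ℚ) d (MvPowerSeries.X i * E ^ i))
    (d : ℕ →₀ ℕ) (m : ℕ) :
    MvPowerSeries.coeff (R := ℚ) d (E ^ (m + 1)) =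
      ∑ i ∈ Finset.range (deg d + 1),
        (i.factorial : ℚ)⁻¹ *
          (if Finsupp.single i 1 ≤ d then
            MvPowerSeries.coeff (R := ℚ) (d - Finsupp.single i 1) (E ^ (i + m)) else 0) := by
  classical
  have hvan : ∀ (a : ℕ →₀ ℕ) (i : ℕ), deg a < i →
      MvPowerSeries.coeff (R := ℚ) a (MvPowerSeries.X i * E ^ i) = 0 := by
    intro a i hia
    rw [coeff_X_mul']
    split_ifs with hle
    · apply coeff_pow_zero_of_deg_lt E hE0
      have := deg_sub_single a i hle
      omega
    · rfl
  have step1 : MvPowerSeries.coeff (R := ℚ) d (E ^ (m + 1)) =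
      ∑ p ∈ Finset.HasAntidiagonal.antidiagonal d,
        (∑ i ∈ Finset.range (deg d + 1),
          (i.factorial : ℚ)⁻¹ * MvPowerSeries.coeff (R := ℚ) p.1 (MvPowerSeries.X i * E ^ i)) *
          MvPowerSeries.coeff (R := ℚ) p.2 (E ^ m) := by
    rw [pow_succ']
    rw [MvPowerSeries.coeff_mul]
    refine Finset.sum_congr rfl ?_
    rintro ⟨a, b⟩ hab
    rw [Finset.HasAntidiagonal.mem_antidiagonal] at hab
    have hdeg : deg a ≤ deg d := by
      have := deg_add a b; rw [hab] at this; omega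
    congr 1
    rw [hEeq a]
    refine Finset.sum_subset ?_ ?_
    · exact Finset.range_subset_range.2 (Nat.succ_le_succ hdeg)
    · intro i _ hi
      rw [Finset.mem_range, not_lt] at hi
      have hlt : deg a < i := by
        have : deg a = a.sum fun _ m => m := rfl
        omega
      rw [hvan a i hlt, mul_zero]
  rw [step1]
  simp only [Finset.sum_mul]
  rw [Finset.sum_comm]
  refine Finset.sum_congr rfl ?_
  intro i _
  rw [← coeff_X_mul']
  have : MvPowerSeries.X i * E ^ (i + m) = (MvPowerSeries.X (R := ℚ) i * E ^ i) * E ^ m := by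
    rw [mul_assoc, ← pow_add]
  rw [this, MvPowerSeries.coeff_mul, Finset.mul_sum]
  refine Finset.sum_congr rfl ?_
  rintro ⟨a, b⟩ _
  ring

lemma wt_zero : wt 0 = 0 := by simp [wt]
lemma deg_zero : deg 0 = 0 := by simp [deg]

lemma coeff_pow_eq_c (E : MvPowerSeries ℕ ℚ)
    (hE0 : MvPowerSeries.constantCoeff (σ := ℕ) (R := ℚ) E = 0)
    (hEeq : ∀ d : ℕ →₀ ℕ,
      MvPowerSeries.coeff (R := ℚ) d E =
        ∑ i ∈ Finset.range ((d.sum fun _ m => m) + 1),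
          (i.factorial : ℚ)⁻¹ * MvPowerSeries.coeff (R := ℚ) d (MvPowerSeries.X i * E ^ i)) :
    ∀ (d : ℕ →₀ ℕ) (m : ℕ), MvPowerSeries.coeff (R := ℚ) d (E ^ m) = c m d := by
  suffices H : ∀ n (d : ℕ →₀ ℕ), deg d = n → ∀ m,
      MvPowerSeries.coeff (R := ℚ) d (E ^ m) = c m d by
    intro d m; exact H (deg d) d rfl m
  intro n
  induction n using Nat.strong_induction_on with
  | _ n ih =>
    intro d hdn m
    match m with
    | 0 =>
      classical
      rw [pow_zero, MvPowerSeries.coeff_one, c, if_pos rfl]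
    | m + 1 =>
      rcases eq_or_ne d 0 with rfl | hd
      · rw [coeff_pow_zero_of_deg_lt E hE0 (m + 1) 0 (by rw [deg_zero]; omega)]
        rw [c, if_neg (by omega), if_neg (by rw [wt_zero, deg_zero]; omega)]
      · rw [coeff_pow_succ E hE0 hEeq d m, c_identity d hd m]
        refine Finset.sum_congr rfl ?_
        intro i _
        congr 1
        by_cases hle : Finsupp.single i 1 ≤ d
        · rw [if_pos hle, if_pos hle]
          have hdeg := deg_sub_single d i hle
          have hn1 : 1 ≤ n := by
            rcases Nat.eq_zero_or_pos n with h | h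
            · rw [← hdn, deg_eq_zero] at h; exact absurd h hd
            · exact h
          exact ih (n - 1) (by omega) _ (by omega) (i + m)
        · rw [if_neg hle, if_neg hle]

lemma coeff_pd (j : ℕ) (F : MvPowerSeries ℕ ℚ) (d : ℕ →₀ ℕ) :
    MvPowerSeries.coeff (R := ℚ) d (pd j F) =
      ((d j + 1 : ℕ) : ℚ) * MvPowerSeries.coeff (R := ℚ) (d + Finsupp.single j 1) F := by
  rw [MvPowerSeries.coeff_apply]
  show (d j + 1 : ℕ) • MvPowerSeries.coeff (R := ℚ) (d + Finsupp.single j 1) F = _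
  rw [nsmul_eq_mul]

/-- Let `E(t)` be the solution of `B_t(E(t)) = 0` with zero constant
term, and let `F₀(t) = ∑_{n≥3} (1/n!) ∑_{i₁+⋯+iₙ=n−3} ((n−3)!/(i₁!⋯iₙ!)) t_{i₁}⋯t_{iₙ}`
be the genus-zero free energy (given by its coefficients).  Then
`∂²F₀/∂tᵢ∂tₗ = E^{i+ℓ+1}/(i! ℓ! (i+ℓ+1))` for all `i, ℓ ≥ 0`; in particular
`∂²F₀/∂t₀² = E(t)`. -/
theorem second_derivatives_of_F0
    (E : MvPowerSeries ℕ ℚ)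
    (hE0 : MvPowerSeries.constantCoeff (σ := ℕ) (R := ℚ) E = 0)
    (hEeq : ∀ d : ℕ →₀ ℕ,
      MvPowerSeries.coeff (R := ℚ) d E =
        ∑ i ∈ Finset.range ((d.sum fun _ m => m) + 1),
          (i.factorial : ℚ)⁻¹ * MvPowerSeries.coeff (R := ℚ) d (MvPowerSeries.X i * E ^ i))
    (F0 : MvPowerSeries ℕ ℚ)
    (hF0 : ∀ d : ℕ →₀ ℕ,
      MvPowerSeries.coeff (R := ℚ) d F0 =
        if (d.sum fun i m => i * m) + 3 = d.sum fun _ m => m then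
          (((d.sum fun _ m => m) - 3).factorial : ℚ) /
            ((d.prod fun i m => m.factorial * i.factorial ^ m : ℕ) : ℚ)
        else 0) :
    (∀ i ℓ : ℕ, pd i (pd ℓ F0) =
      ((i.factorial * ℓ.factorial * (i + ℓ + 1) : ℕ) : ℚ)⁻¹ • E ^ (i + ℓ + 1)) ∧
    pd 0 (pd 0 F0) = E := by
  have key : ∀ i ℓ : ℕ, pd i (pd ℓ F0) =
      ((i.factorial * ℓ.factorial * (i + ℓ + 1) : ℕ) : ℚ)⁻¹ • E ^ (i + ℓ + 1) := by
    intro i ℓ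
    apply MvPowerSeries.ext
    intro d
    set d' : ℕ →₀ ℕ := d + Finsupp.single i 1 with hd'
    set d'' : ℕ →₀ ℕ := d' + Finsupp.single ℓ 1 with hd''
    rw [coeff_pd, coeff_pd, MvPowerSeries.coeff_smul,
        coeff_pow_eq_c E hE0 hEeq d (i + ℓ + 1), hF0]
    have hdegd'' : (d''.sum fun _ m => m) = deg d + 2 := by
      show deg d'' = _
      rw [hd'', deg_add, hd', deg_add, deg_single, deg_single]
    have hwtd'' : (d''.sum fun j m => j * m) = wt d + i + ℓ := by
      show wt d'' = _
      rw [hd'', wt_add, hd', wt_add, wt_single, wt_single]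
    have hWd'' : (d''.prod fun j m => m.factorial * j.factorial ^ m) =
        (d' ℓ + 1) * ℓ.factorial * ((d i + 1) * i.factorial * W d) := by
      show W d'' = _
      rw [hd'', W_add_single, hd', W_add_single]
    rw [hdegd'', hwtd'', hWd'']
    rw [c]
    rw [if_neg (show ¬ (i + ℓ + 1 = 0) by omega)]
    by_cases hcond : wt d + (i + ℓ + 1) = deg d
    · rw [if_pos (show wt d + (i + ℓ + 1) = deg d from hcond),
          if_pos (show (wt d + i + ℓ) + 3 = deg d + 2 by omega)]
      have hn1 : 1 ≤ deg d := by omega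
      have h1 : deg d + 2 - 3 = deg d - 1 := by omega
      rw [h1]
      have hWdne : ((W d : ℕ) : ℚ) ≠ 0 := (Nat.cast_pos.2 (W_pos d)).ne'
      have hfi : (i.factorial : ℚ) ≠ 0 := Nat.cast_ne_zero.2 i.factorial_ne_zero
      have hfl : (ℓ.factorial : ℚ) ≠ 0 := Nat.cast_ne_zero.2 ℓ.factorial_ne_zero
      have hA : ((d' ℓ + 1 : ℕ) : ℚ) ≠ 0 := Nat.cast_ne_zero.2 (by omega)
      have hB : ((d i + 1 : ℕ) : ℚ) ≠ 0 := Nat.cast_ne_zero.2 (by omega)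
      have hil : ((i + ℓ + 1 : ℕ) : ℚ) ≠ 0 := Nat.cast_ne_zero.2 (by omega)
      have hexp : d' ℓ = d ℓ + (Finsupp.single i 1) ℓ := Finsupp.add_apply d (Finsupp.single i 1) ℓ
      rw [hexp]
      push_cast
      field_simp
    · rw [if_neg (show ¬ (wt d + (i + ℓ + 1) = deg d) from hcond),
          if_neg (show ¬ ((wt d + i + ℓ) + 3 = deg d + 2) by omega)]
      simp
  refine ⟨key, ?_⟩
  have h00 := key 0 0
  simpa using h00
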